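/- Let W, Y be random variables on a probability space, X, Z measurable maps, and G a group indicator. Suppose (i) consistency: Y = Y(w) on {W = w}; (ii) conditional independence of W and (Y(1), Y(0)) given (X, Z) on the event {G = o}; (iii) conditional independence of G and (Y(1), Y(0)) given X. Then E[Y(1) − Y(0) | X = x] = E[ E[Y | W=1, X=x, Z, G=o] − E[Y | W=0, X=x, Z, G=o] | X = x, G = o ], i.e., the individual treatment effect is identified by adjusting for (X, Z) in the observational data. -/

import Mathlib

open MeasureTheory
open scoped ENNReal

/-- Conditional expectation of `f` given the event `A`:  `E[f | A] = (∫_A f dμ) / μ(A)`. -/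
noncomputable def cexp {Ω : Type*} [MeasurableSpace Ω] (μ : Measure Ω)
    (f : Ω → ℝ) (A : Set Ω) : ℝ :=
  (∫ ω in A, f ω ∂μ) / (μ A).toReal

/-- Tower property over a countable latent variable: averaging the conditional expectations
`cexp μ f (A ∩ {Z = z})` over `A` recovers `∫_A f`.  Works for arbitrary (possibly
non-measurable) `A`. -/
lemma tower_aux {Ω 𝒵 : Type*} [MeasurableSpace Ω] [MeasurableSpace 𝒵]
    [Countable 𝒵] [MeasurableSingletonClass 𝒵] (μ : Measure Ω) [IsFiniteMeasure μ]
    (f : Ω → ℝ) (hfi : Integrable f μ) (Z : Ω → 𝒵) (hZ : Measurable Z)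
    (A : Set Ω) :
    IntegrableOn (fun ω => cexp μ f (A ∩ Z ⁻¹' {Z ω})) A μ ∧
    ∫ ω in A, cexp μ f (A ∩ Z ⁻¹' {Z ω}) ∂μ = ∫ ω in A, f ω ∂μ := by
  set ν : Measure Ω := μ.restrict A with hν_def
  set t : 𝒵 → Set Ω := fun z => Z ⁻¹' {z} with ht_def
  have ht : ∀ z, MeasurableSet (t z) := fun z => hZ (measurableSet_singleton z)
  have hdisj : Pairwise (Function.onFun Disjoint t) := by
    intro a b hab
    refine Set.disjoint_left.mpr ?_
    intro ω ha hb
    simp only [ht_def, Set.mem_preimage, Set.mem_singleton_iff] at ha hb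
    exact hab (ha.symm.trans hb)
  have hunion : ⋃ z, t z = Set.univ := by
    ext ω; simp [ht_def]
  have hset : ∀ z, ν (t z) = μ (A ∩ t z) := by
    intro z; rw [hν_def, Measure.restrict_apply (ht z), Set.inter_comm]
  have hrest : ∀ z, ν.restrict (t z) = μ.restrict (A ∩ t z) := by
    intro z; rw [hν_def, Measure.restrict_restrict (ht z), Set.inter_comm]
  have hfiν : Integrable f ν := hfi.restrict
  set g : 𝒵 → ℝ := fun z => cexp μ f (A ∩ t z) with hg_def
  have hg : ∀ z, g z * (ν (t z)).toReal = ∫ ω in t z, f ω ∂ν := by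
    intro z
    rw [hset z, hrest z]
    by_cases h : μ (A ∩ t z) = 0
    · simp [hg_def, cexp, h, Measure.restrict_eq_zero.mpr h]
    · exact div_mul_cancel₀ _ (ENNReal.toReal_ne_zero.mpr ⟨h, measure_ne_top _ _⟩)
  have hpt : ∀ z, ∀ ω ∈ t z, cexp μ f (A ∩ Z ⁻¹' {Z ω}) = g z := by
    intro z ω hω
    simp only [ht_def, Set.mem_preimage, Set.mem_singleton_iff] at hω
    simp only [hg_def, ht_def, hω]
  have hmeas : Measurable (fun ω => cexp μ f (A ∩ Z ⁻¹' {Z ω})) := by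
    have : (fun ω => cexp μ f (A ∩ Z ⁻¹' {Z ω}))
        = (fun z => cexp μ f (A ∩ Z ⁻¹' {z})) ∘ Z := rfl
    rw [this]
    exact (measurable_of_countable _).comp hZ
  have hbound : ∀ z, ‖g z‖₊ * ν (t z) ≤ ∫⁻ ω in t z, ‖f ω‖₊ ∂ν := by
    intro z
    by_cases h : ν (t z) = 0
    · simp [h]
    · have hm : (ν (t z)).toReal ≠ 0 := ENNReal.toReal_ne_zero.mpr ⟨h, measure_ne_top _ _⟩
      have h1 : (‖g z‖₊ : ℝ≥0∞) * ν (t z) = ENNReal.ofReal (|g z| * (ν (t z)).toReal) := by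
        rw [← enorm_eq_nnnorm, ENNReal.ofReal_mul (abs_nonneg _), ← Real.enorm_eq_ofReal_abs,
          ENNReal.ofReal_toReal (measure_ne_top ν (t z))]
      rw [h1]
      have h2 : |g z| * (ν (t z)).toReal ≤ ∫ ω in t z, ‖f ω‖ ∂ν := by
        calc |g z| * (ν (t z)).toReal = |g z * (ν (t z)).toReal| := by
              rw [abs_mul, abs_of_nonneg ENNReal.toReal_nonneg]
          _ = |∫ ω in t z, f ω ∂ν| := by rw [hg z]
          _ ≤ ∫ ω in t z, ‖f ω‖ ∂ν := by
              simpa using norm_integral_le_integral_norm (μ := ν.restrict (t z)) f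
      calc ENNReal.ofReal (|g z| * (ν (t z)).toReal)
          ≤ ENNReal.ofReal (∫ ω in t z, ‖f ω‖ ∂ν) := ENNReal.ofReal_le_ofReal h2
        _ ≤ ∫⁻ ω in t z, ‖f ω‖₊ ∂ν :=
            (ofReal_integral_norm_eq_lintegral_enorm hfiν.restrict).le
  have hintν : Integrable (fun ω => cexp μ f (A ∩ Z ⁻¹' {Z ω})) ν := by
    refine ⟨hmeas.aestronglyMeasurable, ?_⟩
    rw [HasFiniteIntegral]
    have e1 : ∫⁻ ω, ‖cexp μ f (A ∩ Z ⁻¹' {Z ω})‖₊ ∂ν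
        = ∑' z, ∫⁻ ω in t z, ‖cexp μ f (A ∩ Z ⁻¹' {Z ω})‖₊ ∂ν := by
      have := lintegral_iUnion (μ := ν) ht hdisj
        (fun ω => (‖cexp μ f (A ∩ Z ⁻¹' {Z ω})‖₊ : ℝ≥0∞))
      rwa [hunion, Measure.restrict_univ] at this
    simp only [enorm_eq_nnnorm]; rw [e1]
    calc ∑' z, ∫⁻ ω in t z, ‖cexp μ f (A ∩ Z ⁻¹' {Z ω})‖₊ ∂ν
        = ∑' z, ‖g z‖₊ * ν (t z) := by
          refine tsum_congr fun z => ?_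
          rw [setLIntegral_congr_fun (ht z)
            (fun ω hω => by rw [hpt z ω hω])]
          simp [mul_comm]
      _ ≤ ∑' z, ∫⁻ ω in t z, ‖f ω‖₊ ∂ν := ENNReal.tsum_le_tsum hbound
      _ = ∫⁻ ω, ‖f ω‖₊ ∂ν := by
          have := lintegral_iUnion (μ := ν) ht hdisj (fun ω => (‖f ω‖₊ : ℝ≥0∞))
          rw [hunion, Measure.restrict_univ] at this
          exact this.symm
      _ < ⊤ := hfiν.2
  refine ⟨hintν, ?_⟩
  have hA1 := integral_iUnion (μ := ν) ht hdisj
    (f := fun ω => cexp μ f (A ∩ Z ⁻¹' {Z ω})) (by rw [hunion]; exact hintν.integrableOn)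
  have hA2 := integral_iUnion (μ := ν) ht hdisj (f := f)
    (by rw [hunion]; exact hfiν.integrableOn)
  rw [hunion, Measure.restrict_univ] at hA1 hA2
  show ∫ ω, cexp μ f (A ∩ Z ⁻¹' {Z ω}) ∂ν = ∫ ω, f ω ∂ν
  rw [hA1, hA2]
  refine tsum_congr fun z => ?_
  rw [setIntegral_congr_fun (ht z) (fun ω hω => hpt z ω hω), setIntegral_const, smul_eq_mul,
    mul_comm]; exact hg z

/-- On a set where `W = w` and `Y` agrees with `Yw` whenever `W = w`, the conditional
expectations of `Y` and `Yw` coincide (no measurability of the set needed). -/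
lemma cexp_congr_on {Ω : Type*} [MeasurableSpace Ω] (μ : Measure Ω)
    (W Y Yw : Ω → ℝ) (hWm : Measurable W) (w : ℝ)
    (hY : ∀ ω, W ω = w → Y ω = Yw ω) (S : Set Ω) (hS : ∀ ω ∈ S, W ω = w) :
    cexp μ Y S = cexp μ Yw S := by
  have hae : Y =ᵐ[μ.restrict S] Yw := by
    rw [Filter.EventuallyEq, ae_iff]
    have hsub : {ω | ¬Y ω = Yw ω} ⊆ (W ⁻¹' {w})ᶜ :=
      fun ω h hmem => h (hY ω (by simpa using hmem))
    have h0 : μ.restrict S ((W ⁻¹' {w})ᶜ) = 0 := by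
      rw [Measure.restrict_apply (hWm (measurableSet_singleton w)).compl]
      have he : (W ⁻¹' {w})ᶜ ∩ S = ∅ := by
        ext ω
        simp only [Set.mem_inter_iff, Set.mem_compl_iff, Set.mem_preimage,
          Set.mem_singleton_iff, Set.mem_empty_iff_false, iff_false, not_and]
        intro h1 h2
        exact h1 (hS ω h2)
      rw [he, measure_empty]
    exact measure_mono_null hsub h0
  simp only [cexp, integral_congr_ae hae]

/-- Under (i) consistency, (ii) conditional (mean) independence of `W` and the
potential outcomes `(Y(1), Y(0))` given `(X, Z)` on the observational group `{G = o}`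
(`G = true` encodes `o`), and (iii) conditional independence of `G` and the potential
outcomes given `X`, the individual treatment effect is identified by adjusting for
`(X, Z)` in the observational data:
`E[Y(1) − Y(0) | X = x]
  = E[ E[Y | W=1, X=x, Z, G=o] − E[Y | W=0, X=x, Z, G=o] | X = x, G = o ]`. -/
theorem longterm_ite_identification_latent_adjustment
    {Ω 𝒳 𝒵 : Type*} [MeasurableSpace Ω] [MeasurableSpace 𝒳] [MeasurableSpace 𝒵]
    [Countable 𝒵] [MeasurableSingletonClass 𝒵]
    (μ : Measure Ω) [IsProbabilityMeasure μ]
    (W Y Y0 Y1 : Ω → ℝ) (X : Ω → 𝒳) (Z : Ω → 𝒵) (G : Ω → Bool) (x : 𝒳)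
    (hWm : Measurable W) (hY0m : Measurable Y0) (hY1m : Measurable Y1)
    (hXm : Measurable X) (hZm : Measurable Z) (hGm : Measurable G)
    (hY0i : Integrable Y0 μ) (hY1i : Integrable Y1 μ)
    -- binary treatment
    (hWbin : ∀ ω, W ω = 0 ∨ W ω = 1)
    -- (i) consistency: Y = Y(w) on {W = w}
    (hcons : ∀ ω, Y ω = W ω * Y1 ω + (1 - W ω) * Y0 ω)
    -- positivity
    (hposX : 0 < μ {ω | X ω = x})
    (hposXG : 0 < μ {ω | X ω = x ∧ G ω = true})
    (hposWXZG : ∀ z : 𝒵, 0 < μ {ω | X ω = x ∧ Z ω = z ∧ G ω = true} →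
      (0 < μ {ω | W ω = 1 ∧ X ω = x ∧ Z ω = z ∧ G ω = true} ∧
       0 < μ {ω | W ω = 0 ∧ X ω = x ∧ Z ω = z ∧ G ω = true}))
    -- (ii) conditional (mean) independence of W and (Y(1), Y(0)) given (X, Z) on {G = o}
    (hCI1 : ∀ z : 𝒵,
      cexp μ Y1 {ω | W ω = 1 ∧ X ω = x ∧ Z ω = z ∧ G ω = true}
        = cexp μ Y1 {ω | X ω = x ∧ Z ω = z ∧ G ω = true})
    (hCI0 : ∀ z : 𝒵,
      cexp μ Y0 {ω | W ω = 0 ∧ X ω = x ∧ Z ω = z ∧ G ω = true}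
        = cexp μ Y0 {ω | X ω = x ∧ Z ω = z ∧ G ω = true})
    -- (iii) conditional independence of G and (Y(1), Y(0)) given X (mean form)
    (hEV1 : cexp μ Y1 {ω | X ω = x ∧ G ω = true} = cexp μ Y1 {ω | X ω = x})
    (hEV0 : cexp μ Y0 {ω | X ω = x ∧ G ω = true} = cexp μ Y0 {ω | X ω = x}) :
    cexp μ (fun ω => Y1 ω - Y0 ω) {ω | X ω = x}
      = cexp μ (fun ω =>
          cexp μ Y {ω' | W ω' = 1 ∧ X ω' = x ∧ Z ω' = Z ω ∧ G ω' = true}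
            - cexp μ Y {ω' | W ω' = 0 ∧ X ω' = x ∧ Z ω' = Z ω ∧ G ω' = true})
        {ω | X ω = x ∧ G ω = true} := by
  have hYW1 : ∀ ω, W ω = 1 → Y ω = Y1 ω := fun ω h => by rw [hcons ω, h]; ring
  have hYW0 : ∀ ω, W ω = 0 → Y ω = Y0 ω := fun ω h => by rw [hcons ω, h]; ring
  have hsetB : ∀ z : 𝒵, {ω | X ω = x ∧ Z ω = z ∧ G ω = true}
      = {ω | X ω = x ∧ G ω = true} ∩ Z ⁻¹' {z} := by
    intro z; ext ω
    simp only [Set.mem_setOf_eq, Set.mem_inter_iff, Set.mem_preimage, Set.mem_singleton_iff]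
    tauto
  have key1 : ∀ z : 𝒵, cexp μ Y {ω' | W ω' = 1 ∧ X ω' = x ∧ Z ω' = z ∧ G ω' = true}
      = cexp μ Y1 ({ω | X ω = x ∧ G ω = true} ∩ Z ⁻¹' {z}) := by
    intro z
    rw [cexp_congr_on μ W Y Y1 hWm 1 hYW1 _ (fun ω hω => hω.1), hCI1 z, hsetB z]
  have key0 : ∀ z : 𝒵, cexp μ Y {ω' | W ω' = 0 ∧ X ω' = x ∧ Z ω' = z ∧ G ω' = true}
      = cexp μ Y0 ({ω | X ω = x ∧ G ω = true} ∩ Z ⁻¹' {z}) := by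
    intro z
    rw [cexp_congr_on μ W Y Y0 hWm 0 hYW0 _ (fun ω hω => hω.1), hCI0 z, hsetB z]
  have hfun : (fun ω =>
          cexp μ Y {ω' | W ω' = 1 ∧ X ω' = x ∧ Z ω' = Z ω ∧ G ω' = true}
            - cexp μ Y {ω' | W ω' = 0 ∧ X ω' = x ∧ Z ω' = Z ω ∧ G ω' = true})
      = (fun ω => cexp μ Y1 ({ω | X ω = x ∧ G ω = true} ∩ Z ⁻¹' {Z ω})
            - cexp μ Y0 ({ω | X ω = x ∧ G ω = true} ∩ Z ⁻¹' {Z ω})) := by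
    funext ω
    rw [key1 (Z ω), key0 (Z ω)]
  obtain ⟨hi1, he1⟩ := tower_aux μ Y1 hY1i Z hZm {ω | X ω = x ∧ G ω = true}
  obtain ⟨hi0, he0⟩ := tower_aux μ Y0 hY0i Z hZm {ω | X ω = x ∧ G ω = true}
  rw [hfun]
  calc cexp μ (fun ω => Y1 ω - Y0 ω) {ω | X ω = x}
      = cexp μ Y1 {ω | X ω = x} - cexp μ Y0 {ω | X ω = x} := by
        simp only [cexp]
        rw [integral_sub hY1i.integrableOn hY0i.integrableOn, sub_div]
    _ = cexp μ Y1 {ω | X ω = x ∧ G ω = true} - cexp μ Y0 {ω | X ω = x ∧ G ω = true} := by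
        rw [hEV1, hEV0]
    _ = cexp μ (fun ω => cexp μ Y1 ({ω | X ω = x ∧ G ω = true} ∩ Z ⁻¹' {Z ω})
            - cexp μ Y0 ({ω | X ω = x ∧ G ω = true} ∩ Z ⁻¹' {Z ω}))
          {ω | X ω = x ∧ G ω = true} := by
        simp only [cexp] at hi1 hi0 he1 he0 ⊢
        rw [integral_sub hi1 hi0, he1, he0, sub_div]
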